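/- arXiv:1506.07078 — 2 statements merged into one kernel-verified Lean document; each statement's English description precedes it below -/
import Mathlib

section
/- Let Γ be a finite connected directed acyclic graph with k ≥ 2 vertices and 2k−3 edges, such that all vertices except possibly one have out-degree at most one, and no vertex has exactly one incoming and exactly one outgoing edge. Then k = 2, i.e., Γ is the graph with two vertices joined by a single edge. -/
open Finset

section Aux

variable {V : Type*} [Fintype V] [DecidableEq V] (E : V → V → Prop) [DecidableRel E]

/-- out-degree -/
private def dOut (v : V) : ℕ := (Finset.univ.filter fun w => E v w).card

/-- in-degree -/
private def dIn (v : V) : ℕ := (Finset.univ.filter fun w => E w v).card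

private lemma sum_dOut :
    ∑ v : V, dOut E v = (Finset.univ.filter fun p : V × V => E p.1 p.2).card := by
  rw [Finset.card_filter, Fintype.sum_prod_type]
  exact Finset.sum_congr rfl fun v _ => Finset.card_filter _ _

private lemma sum_dIn :
    ∑ v : V, dIn E v = (Finset.univ.filter fun p : V × V => E p.1 p.2).card := by
  rw [Finset.card_filter, Fintype.sum_prod_type, Finset.sum_comm]
  exact Finset.sum_congr rfl fun v _ => Finset.card_filter _ _

/-- In a finite acyclic digraph, no nonempty set has all-outgoing edges within itself. -/
private lemma acyclic_no_closed (hacyc : ∀ v : V, ¬ Relation.TransGen E v v)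
    (S : Finset V) (hS : ∀ v ∈ S, ∃ w ∈ S, E v w) : S = ∅ := by
  by_contra h
  have : IsTrans V (fun a b => Relation.TransGen E b a) := ⟨fun a b c h1 h2 => h2.trans h1⟩
  have : IsIrrefl V (fun a b => Relation.TransGen E b a) := ⟨fun a h => hacyc a h⟩
  have wf := Finite.wellFounded_of_trans_of_irrefl (fun a b : V => Relation.TransGen E b a)
  obtain ⟨m, hm, hmin⟩ := wf.has_min S (Finset.nonempty_iff_ne_empty.2 h)
  obtain ⟨w, hw, hEw⟩ := hS m hm
  exact hmin w hw (Relation.TransGen.single hEw)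

end Aux

/-- Let `Γ` be a finite connected directed acyclic graph with `k ≥ 2` vertices and
`2k - 3` edges, such that all vertices except possibly one have out-degree at most
one, and no vertex has exactly one incoming and exactly one outgoing edge.  Then
`k = 2`, i.e. `Γ` is the graph with two vertices joined by a single edge. -/
theorem two_vertex_graph {V : Type*} [Fintype V] [DecidableEq V]
    (E : V → V → Prop) [DecidableRel E] (k : ℕ) (hk : 2 ≤ k)
    (hcard : Fintype.card V = k)
    (hedges : (Finset.univ.filter fun p : V × V => E p.1 p.2).card = 2 * k - 3)
    (hconn : ∀ u v : V, Relation.ReflTransGen (fun a b => E a b ∨ E b a) u v)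
    (hacyc : ∀ v : V, ¬ Relation.TransGen E v v)
    (hout : ∃ v₀ : V, ∀ v : V, v ≠ v₀ →
      (Finset.univ.filter fun w => E v w).card ≤ 1)
    (hno11 : ∀ v : V, ¬ ((Finset.univ.filter fun w => E w v).card = 1 ∧
      (Finset.univ.filter fun w => E v w).card = 1)) :
    k = 2 := by
  classical
  by_contra hne
  have hk3 : 3 ≤ k := by omega
  obtain ⟨v₀, hv₀⟩ := hout
  have hv₀' : ∀ v : V, v ≠ v₀ → dOut E v ≤ 1 := hv₀
  have hno11' : ∀ v : V, ¬ (dIn E v = 1 ∧ dOut E v = 1) := hno11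
  have hloop : ∀ v : V, ¬ E v v := fun v h => hacyc v (Relation.TransGen.single h)
  have hsum_out : ∑ v : V, dOut E v = 2 * k - 3 := by rw [sum_dOut, hedges]
  have hsum_in : ∑ v : V, dIn E v = 2 * k - 3 := by rw [sum_dIn, hedges]
  have hv0mem : v₀ ∈ (univ : Finset V) := mem_univ _
  have hsplit_out : dOut E v₀ + ∑ v ∈ univ.erase v₀, dOut E v = 2 * k - 3 := by
    rw [← hsum_out]; exact Finset.add_sum_erase _ _ hv0mem
  have hcard_erase : (univ.erase v₀).card = k - 1 := by
    rw [Finset.card_erase_of_mem hv0mem, Finset.card_univ, hcard]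
  have hsub : (univ.filter fun w => E v₀ w) ⊆ univ.erase v₀ := by
    intro w hw
    rw [Finset.mem_filter] at hw
    exact Finset.mem_erase.2 ⟨fun h => hloop v₀ (h ▸ hw.2), mem_univ _⟩
  have hd0le : dOut E v₀ ≤ k - 1 := hcard_erase ▸ Finset.card_le_card hsub
  have hrest_le : ∑ v ∈ univ.erase v₀, dOut E v ≤ k - 1 := by
    calc ∑ v ∈ univ.erase v₀, dOut E v ≤ (univ.erase v₀).card * 1 := by
          rw [← smul_eq_mul]
          exact Finset.sum_le_card_nsmul _ _ 1
            (fun v hv => hv₀' v (Finset.mem_erase.1 hv).1)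
      _ = k - 1 := by rw [hcard_erase, mul_one]
  have hcases : dOut E v₀ = k - 2 ∨ dOut E v₀ = k - 1 := by omega
  rcases hcases with h1 | h1
  · -- dOut v₀ = k - 2 : every other vertex has out-degree 1, so all have out-degree ≥ 1
    have hrest : ∑ v ∈ univ.erase v₀, dOut E v = k - 1 := by omega
    have hall1 : ∀ v ∈ univ.erase v₀, 1 ≤ dOut E v := by
      by_contra hc
      push_neg at hc
      obtain ⟨v, hv, hv1⟩ := hc
      have hlt : ∑ v ∈ univ.erase v₀, dOut E v < ∑ _v ∈ univ.erase v₀, 1 :=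
        Finset.sum_lt_sum (fun i hi => hv₀' i (Finset.mem_erase.1 hi).1)
          ⟨v, hv, by omega⟩
      rw [Finset.sum_const, smul_eq_mul, mul_one, hcard_erase] at hlt
      omega
    have hpos : ∀ v ∈ (univ : Finset V), ∃ w ∈ (univ : Finset V), E v w := by
      intro v _
      have hd : 1 ≤ dOut E v := by
        by_cases hv : v = v₀
        · rw [hv, h1]; omega
        · exact hall1 v (Finset.mem_erase.2 ⟨hv, mem_univ _⟩)
      obtain ⟨w, hw⟩ := Finset.card_pos.1 hd
      exact ⟨w, mem_univ _, (Finset.mem_filter.1 hw).2⟩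
    have := acyclic_no_closed E hacyc univ hpos
    have : Fintype.card V = 0 := by rw [← Finset.card_univ, this, Finset.card_empty]
    omega
  · -- dOut v₀ = k - 1 : v₀ points to everyone else
    have hfull : (univ.filter fun w => E v₀ w) = univ.erase v₀ :=
      Finset.eq_of_subset_of_card_le hsub (by
        have : (univ.filter fun w => E v₀ w).card = k - 1 := h1
        omega)
    have hEv0 : ∀ w : V, w ≠ v₀ → E v₀ w := by
      intro w hw
      have : w ∈ (univ.filter fun w => E v₀ w) :=
        hfull ▸ Finset.mem_erase.2 ⟨hw, mem_univ _⟩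
      exact (Finset.mem_filter.1 this).2
    have hrest : ∑ v ∈ univ.erase v₀, dOut E v = k - 2 := by omega
    set O : Finset V := (univ.erase v₀).filter (fun v => ¬ dOut E v = 0) with hO
    set Z : Finset V := (univ.erase v₀).filter (fun v => dOut E v = 0) with hZ
    have hO1 : ∀ v ∈ O, dOut E v = 1 := by
      intro v hv
      rw [hO, Finset.mem_filter, Finset.mem_erase] at hv
      have := hv₀' v hv.1.1
      omega
    have hZO : ∑ v ∈ Z, dOut E v + ∑ v ∈ O, dOut E v = k - 2 := by
      rw [← hrest]
      exact Finset.sum_filter_add_sum_filter_not _ _ _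
    have hZsum : ∑ v ∈ Z, dOut E v = 0 := by
      apply Finset.sum_eq_zero
      intro v hv
      exact (Finset.mem_filter.1 hv).2
    have hOsum : ∑ v ∈ O, dOut E v = O.card := by
      rw [Finset.sum_congr rfl hO1, Finset.sum_const, smul_eq_mul, mul_one]
    have hOcard : O.card = k - 2 := by omega
    have hZOcard : Z.card + O.card = k - 1 := by
      rw [← hcard_erase, hZ, hO]
      exact Finset.card_filter_add_card_filter_not _
    have hZcard : Z.card = 1 := by omega
    -- lower bound on in-degrees
    set L : V → ℕ := fun v => if v = v₀ then 0 else if dOut E v = 0 then 1 else 2 with hL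
    have hLle : ∀ v ∈ (univ : Finset V), L v ≤ dIn E v := by
      intro v _
      by_cases hv : v = v₀
      · simp [hL, hv]
      · have hin1 : 1 ≤ dIn E v :=
          Finset.card_pos.2 ⟨v₀, Finset.mem_filter.2 ⟨mem_univ _, hEv0 v hv⟩⟩
        by_cases hz : dOut E v = 0
        · simpa [hL, hv, hz] using hin1
        · have hd1 : dOut E v = 1 := by have := hv₀' v hv; omega
          have hne1 : dIn E v ≠ 1 := fun hc => hno11' v ⟨hc, hd1⟩
          simp only [hL, if_neg hv, if_neg hz]
          omega
    have hLsum : ∑ v : V, L v = 2 * k - 3 := by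
      rw [← Finset.add_sum_erase _ L hv0mem,
        ← Finset.sum_filter_add_sum_filter_not (univ.erase v₀) (fun v => dOut E v = 0) L]
      have e0 : L v₀ = 0 := by simp [hL]
      have eZ : ∑ v ∈ Z, L v = Z.card := by
        rw [Finset.sum_congr rfl (g := fun _ => 1) (fun v hv => by
          rw [hZ, Finset.mem_filter, Finset.mem_erase] at hv
          simp [hL, hv.1.1, hv.2]), Finset.sum_const, smul_eq_mul, mul_one]
      have eO : ∑ v ∈ O, L v = 2 * O.card := by
        rw [Finset.sum_congr rfl (g := fun _ => 2) (fun v hv => by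
          rw [hO, Finset.mem_filter, Finset.mem_erase] at hv
          simp [hL, hv.1.1, hv.2]), Finset.sum_const, smul_eq_mul, mul_comm]
      rw [e0, ← hZ, ← hO, eZ, eO, hZcard, hOcard]
      omega
    have heq : ∀ v ∈ (univ : Finset V), L v = dIn E v :=
      (Finset.sum_eq_sum_iff_of_le hLle).1 (by rw [hLsum, hsum_in])
    have hdinv0 : dIn E v₀ = 0 := by
      have := heq v₀ (mem_univ _)
      simpa [hL] using this.symm
    -- every vertex of O has an out-neighbour in O
    have hstep : ∀ v ∈ O, ∃ w ∈ O, E v w := by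
      intro v hv
      have hvO := hv
      rw [hO, Finset.mem_filter, Finset.mem_erase] at hvO
      have hd1 : dOut E v = 1 := hO1 v hv
      obtain ⟨w, hw⟩ := Finset.card_pos.1 (by omega : 0 < dOut E v)
      have hEvw : E v w := (Finset.mem_filter.1 hw).2
      have hwne : w ≠ v₀ := by
        intro h
        subst h
        have : 0 < dIn E w :=
          Finset.card_pos.2 ⟨v, Finset.mem_filter.2 ⟨mem_univ _, hEvw⟩⟩
        omega
      refine ⟨w, ?_, hEvw⟩
      rw [hO, Finset.mem_filter, Finset.mem_erase]
      refine ⟨⟨hwne, mem_univ _⟩, ?_⟩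
      intro hz
      -- then dIn w = 1, but v₀ and v both point to w
      have hLw : L w = 1 := by simp [hL, hwne, hz]
      have hinw : dIn E w = 1 := by rw [← heq w (mem_univ _), hLw]
      have hpair : ({v₀, v} : Finset V) ⊆ univ.filter (fun u => E u w) := by
        intro u hu
        rw [Finset.mem_insert, Finset.mem_singleton] at hu
        rcases hu with h | h
        · exact Finset.mem_filter.2 ⟨mem_univ _, h ▸ hEv0 w hwne⟩
        · exact Finset.mem_filter.2 ⟨mem_univ _, h ▸ hEvw⟩
      have h2 : 2 ≤ dIn E w := by
        have := Finset.card_le_card hpair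
        rwa [Finset.card_pair (fun h => hvO.1.1 h.symm)] at this
      omega
    have hOempty := acyclic_no_closed E hacyc O hstep
    rw [hOempty, Finset.card_empty] at hOcard
    omega
end

section
/- Let g be a Lie algebra over a field of characteristic zero. The symmetrization map Φ: S(g) → U(g), sending a monomial x₁⋯xₙ to (1/n!) ∑_{σ ∈ Sₙ} x_{σ(1)}⋯x_{σ(n)}, is a linear isomorphism (the Poincaré–Birkhoff–Witt isomorphism). -/
set_option linter.unusedSectionVars false
set_option maxHeartbeats 1000000


/-! The symmetric algebra of a module, constructed as a quotient of the tensor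
algebra by the commutativity relation, together with its canonical linear
embedding. -/

/-- The relation on the tensor algebra defining the symmetric algebra. -/
inductive SymRel (K : Type*) [Field K] (L : Type*) [AddCommGroup L] [Module K L] :
    TensorAlgebra K L → TensorAlgebra K L → Prop
  | comm (a b : L) : SymRel K L (TensorAlgebra.ι K a * TensorAlgebra.ι K b)
      (TensorAlgebra.ι K b * TensorAlgebra.ι K a)

/-- The symmetric algebra `S(L)` on the underlying vector space of `L`. -/
abbrev SymmAlgebra (K : Type*) [Field K] (L : Type*) [AddCommGroup L] [Module K L] :=
  RingQuot (SymRel K L)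

/-- The canonical linear embedding of `L` into its symmetric algebra. -/
noncomputable def ιS (K : Type*) [Field K] (L : Type*) [AddCommGroup L] [Module K L] :
    L →ₗ[K] SymmAlgebra K L :=
  (RingQuot.mkAlgHom K (SymRel K L)).toLinearMap ∘ₗ TensorAlgebra.ι K

/-- The symmetrization property characterizing the PBW isomorphism
`Φ : S(g) ≃ U(g)`: each monomial `x₁ ⋯ xₙ` is sent to
`(1/n!) ∑_{σ ∈ Sₙ} x_{σ(1)} ⋯ x_{σ(n)}`. -/
def IsSymmetrization (K : Type*) [Field K] (L : Type*) [LieRing L] [LieAlgebra K L]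
    (Φ : SymmAlgebra K L ≃ₗ[K] UniversalEnvelopingAlgebra K L) : Prop :=
  ∀ (n : ℕ) (x : Fin n → L),
    Φ ((List.ofFn fun i => ιS K L (x i)).prod) =
      (n.factorial : K)⁻¹ • ∑ σ : Equiv.Perm (Fin n),
        (List.ofFn fun i => UniversalEnvelopingAlgebra.ι K (x (σ i))).prod

namespace PBWaux
variable (K : Type*) [Field K] (L : Type*) [AddCommGroup L] [Module K L]

local notation "mkS" => RingQuot.mkAlgHom K (SymRel K L)

lemma mkS_comm (a b : L) :
    mkS (TensorAlgebra.ι K a) * mkS (TensorAlgebra.ι K b)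
      = mkS (TensorAlgebra.ι K b) * mkS (TensorAlgebra.ι K a) := by
  rw [← map_mul (RingQuot.mkAlgHom K (SymRel K L)), ← map_mul (RingQuot.mkAlgHom K (SymRel K L))]
  exact RingQuot.mkAlgHom_rel K (SymRel.comm a b)

lemma symm_mul_comm (x y : SymmAlgebra K L) : x * y = y * x := by
  obtain ⟨a, rfl⟩ := RingQuot.mkAlgHom_surjective K (SymRel K L) x
  obtain ⟨b, rfl⟩ := RingQuot.mkAlgHom_surjective K (SymRel K L) y
  induction a using TensorAlgebra.induction generalizing b with
  | algebraMap r => simp [Algebra.commutes]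
  | ι a =>
    induction b using TensorAlgebra.induction with
    | algebraMap r => simp [Algebra.commutes]
    | ι b => exact mkS_comm K L a b
    | mul x y hx hy => rw [map_mul, ← mul_assoc, hx, mul_assoc, hy, mul_assoc]
    | add x y hx hy => rw [map_add, mul_add, hx, hy, add_mul]
  | mul x y hx hy => rw [map_mul, mul_assoc, hy, ← mul_assoc, hx, mul_assoc]
  | add x y hx hy => rw [map_add, add_mul, hx, hy, mul_add]

noncomputable instance : CommRing (SymmAlgebra K L) :=
  { (inferInstance : Ring (SymmAlgebra K L)) with mul_comm := symm_mul_comm K L }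

variable {ι : Type*} (b : Module.Basis ι K L)

noncomputable def toMv : SymmAlgebra K L →ₐ[K] MvPolynomial ι K :=
  RingQuot.liftAlgHom K ⟨TensorAlgebra.lift K
    ((Finsupp.linearCombination K fun i : ι => (MvPolynomial.X i : MvPolynomial ι K)).comp
      (b.repr : L →ₗ[K] (ι →₀ K))),
    by rintro x y ⟨a, c⟩; simp [mul_comm]⟩

noncomputable def ofMv : MvPolynomial ι K →ₐ[K] SymmAlgebra K L :=
  MvPolynomial.aeval (fun i => ιS K L (b i))

lemma toMv_ιS (x : L) : toMv K L b (ιS K L x)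
    = (b.repr x).sum fun i c => c • MvPolynomial.X i := by
  simp [toMv, ιS, RingQuot.liftAlgHom_mkAlgHom_apply, Finsupp.linearCombination_apply]

lemma toMv_ιS_basis (i : ι) : toMv K L b (ιS K L (b i)) = MvPolynomial.X i := by
  simp [toMv_ιS]

lemma ofMv_X (i : ι) : ofMv K L b (MvPolynomial.X i) = ιS K L (b i) := by
  simp [ofMv]

lemma ofMv_toMv (x : SymmAlgebra K L) : ofMv K L b (toMv K L b x) = x := by
  obtain ⟨a, rfl⟩ := RingQuot.mkAlgHom_surjective K (SymRel K L) x
  have : ((ofMv K L b).comp (toMv K L b)).comp mkS = (AlgHom.id K _).comp mkS := by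
    apply TensorAlgebra.hom_ext
    ext x
    have : mkS (TensorAlgebra.ι K x) = ιS K L x := rfl
    simp only [LinearMap.coe_comp, Function.comp_apply, AlgHom.toLinearMap_apply, this,
      AlgHom.coe_comp, AlgHom.coe_id, id_eq]
    rw [toMv_ιS, map_finsuppSum]
    simp only [map_smul, ofMv_X]
    conv_rhs => rw [← b.linearCombination_repr x, Finsupp.linearCombination_apply,
      map_finsuppSum]
    simp [map_smul]
  exact DFunLike.congr_fun this a

lemma toMv_ofMv (p : MvPolynomial ι K) : toMv K L b (ofMv K L b p) = p := by
  have : (toMv K L b).comp (ofMv K L b) = AlgHom.id K _ := by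
    apply MvPolynomial.algHom_ext
    intro i
    simp [ofMv_X, toMv_ιS_basis]
  exact DFunLike.congr_fun this p

noncomputable def symmEquivMv : SymmAlgebra K L ≃ₐ[K] MvPolynomial ι K :=
  AlgEquiv.ofAlgHom (toMv K L b) (ofMv K L b)
    (AlgHom.ext (toMv_ofMv K L b)) (AlgHom.ext (ofMv_toMv K L b))

end PBWaux

namespace PBWrep
open MvPolynomial
variable {K : Type*} [Field K] [CharZero K] {L : Type*} [LieRing L] [LieAlgebra K L]
variable {ι : Type*} [LinearOrder ι] (b : Module.Basis ι K L)
attribute [local instance] LieRing.ofAssociativeRing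

local notation "D" => (ι →₀ ℕ)
local notation "P" => MvPolynomial ι K
local notation "UEA" => UniversalEnvelopingAlgebra K L

noncomputable def zz (d : D) : P := monomial d 1

/-- total degree of a monomial exponent -/
def degD (d : D) : ℕ := d.sum fun _ n => n

lemma degD_add (c d : D) : degD (c + d) = degD c + degD d := by
  classical
  simpa [degD] using Finsupp.sum_add_index' (by simp) (by intros; rfl)

lemma degD_single (i : ι) (n : ℕ) : degD (Finsupp.single i n) = n := by
  classical
  simp [degD]

lemma degD_eq_zero {d : D} (h : degD d = 0) : d = 0 := by
  classical
  ext i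
  simp only [Finsupp.coe_zero, Pi.zero_apply]
  by_contra hi
  have hmem : i ∈ d.support := Finsupp.mem_support_iff.mpr (by simpa using hi)
  have : d i ≤ degD d := Finset.single_le_sum (fun _ _ => Nat.zero_le _) hmem
  omega

/-- minimal index in the support -/
noncomputable def minD (d : D) (h : d ≠ 0) : ι :=
  d.support.min' (Finsupp.support_nonempty_iff.mpr h)

lemma minD_mem {d : D} (h : d ≠ 0) : minD d h ∈ d.support :=
  Finset.min'_mem _ _

lemma minD_le {d : D} (h : d ≠ 0) {i : ι} (hi : i ∈ d.support) : minD d h ≤ i :=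
  Finset.min'_le _ _ hi

lemma single_minD_add_sub {d : D} (h : d ≠ 0) :
    Finsupp.single (minD d h) 1 + (d - Finsupp.single (minD d h) 1) = d := by
  classical
  have h1 : 1 ≤ d (minD d h) := by
    have := minD_mem h
    rw [Finsupp.mem_support_iff] at this
    omega
  ext i
  by_cases hi : i = minD d h
  · subst hi; simp [Finsupp.single_apply]; omega
  · simp [Finsupp.single_apply, Ne.symm hi]

lemma degD_sub_single {d : D} (h : d ≠ 0) :
    degD (d - Finsupp.single (minD d h) 1) + 1 = degD d := by
  conv_rhs => rw [← single_minD_add_sub h]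
  rw [degD_add, degD_single]; omega

/-- The filtration of `P` by total degree, as spans of monomials. -/
noncomputable def W (m : ℕ) : Submodule K P :=
  Submodule.span K ((fun d => zz d) '' {d : D | degD d ≤ m})

lemma zz_mem_W {d : D} {m : ℕ} (h : degD d ≤ m) : zz d ∈ W (K := K) m :=
  Submodule.subset_span ⟨d, h, rfl⟩

lemma W_mono {m m' : ℕ} (h : m ≤ m') : W (K := K) (ι := ι) m ≤ W m' :=
  Submodule.span_mono (Set.image_mono fun d hd => le_trans hd h)

/-- truncation to degree ≤ m -/
noncomputable def trunc (m : ℕ) : P →ₗ[K] P :=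
  (basisMonomials ι K).constr K fun d => if degD d ≤ m then zz d else 0

lemma zz_eq_basis (d : D) : zz (K := K) d = basisMonomials ι K d := by
  simp [zz, coe_basisMonomials]

lemma trunc_zz (m : ℕ) (d : D) :
    trunc (K := K) m (zz d) = if degD d ≤ m then zz d else 0 := by
  rw [zz_eq_basis, trunc, Module.Basis.constr_basis]
  simp [zz_eq_basis]

lemma trunc_of_mem_W {m : ℕ} {p : P} (h : p ∈ W (K := K) m) : trunc m p = p := by
  induction h using Submodule.span_induction with
  | mem x hx =>
    obtain ⟨d, hd, rfl⟩ := hx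
    simp only [trunc_zz]
    rw [if_pos (by exact hd)]
  | zero => simp
  | add x y _ _ hx hy => rw [map_add, hx, hy]
  | smul a x _ hx => rw [map_smul, hx]


/-- value of the recursively defined action on basis elements and monomials -/
noncomputable def Fval (Fprev : L →ₗ[K] Module.End K P) (n : ℕ) (i : ι) (d : D) : P :=
  if degD d ≤ n + 1 then
    if h0 : d = 0 then X i
    else
      zz (d + Finsupp.single i 1) +
        (if i ≤ minD d h0 then 0 else
          Fprev (b (minD d h0)) (trunc n
            (Fprev (b i) (zz (d - Finsupp.single (minD d h0) 1))
              - zz ((d - Finsupp.single (minD d h0) 1) + Finsupp.single i 1)))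
          + Fprev ⁅b i, b (minD d h0)⁆ (zz (d - Finsupp.single (minD d h0) 1)))
  else 0

noncomputable def F : ℕ → (L →ₗ[K] Module.End K P)
  | 0 => b.constr K fun i => (basisMonomials ι K).constr K fun d =>
      if d = 0 then X i else 0
  | (n+1) => b.constr K fun i => (basisMonomials ι K).constr K fun d => Fval b (F n) n i d

lemma F_zero_apply (i : ι) (d : D) :
    F b 0 (b i) (zz d) = if d = 0 then X i else 0 := by
  rw [F, Module.Basis.constr_basis, zz_eq_basis, Module.Basis.constr_basis]

lemma F_succ_apply (n : ℕ) (i : ι) (d : D) :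
    F b (n+1) (b i) (zz d) = Fval b (F b n) n i d := by
  rw [F, Module.Basis.constr_basis, zz_eq_basis, Module.Basis.constr_basis]

/-- the action of `L` on the polynomial ring -/
noncomputable def rho : L →ₗ[K] Module.End K P :=
  b.constr K fun i => (basisMonomials ι K).constr K fun d => F b (degD d) (b i) (zz d)

lemma rho_apply (i : ι) (d : D) :
    rho b (b i) (zz d) = F b (degD d) (b i) (zz d) := by
  rw [rho, Module.Basis.constr_basis, zz_eq_basis, Module.Basis.constr_basis, ← zz_eq_basis]


lemma Fval_of {n : ℕ} {d : D} (Fprev : L →ₗ[K] Module.End K P) (i : ι)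
    (h : degD d ≤ n + 1) (h0 : d ≠ 0) :
    Fval b Fprev n i d =
      zz (d + Finsupp.single i 1) +
        (if i ≤ minD d h0 then 0 else
          Fprev (b (minD d h0)) (trunc n
            (Fprev (b i) (zz (d - Finsupp.single (minD d h0) 1))
              - zz ((d - Finsupp.single (minD d h0) 1) + Finsupp.single i 1)))
          + Fprev ⁅b i, b (minD d h0)⁆ (zz (d - Finsupp.single (minD d h0) 1))) := by
  rw [Fval, if_pos h, dif_neg h0]

lemma Fval_zero {n : ℕ} (Fprev : L →ₗ[K] Module.End K P) (i : ι) :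
    Fval b Fprev n i 0 = X i := by
  rw [Fval, if_pos (by simp [degD]), dif_pos rfl]

lemma X_eq_zz (i : ι) : (X i : P) = zz (Finsupp.single i 1) := by
  simp [zz, X, monomial]

/-- statement: `F (n+1)` agrees with `F n` in degrees `≤ n` -/
def P1 (n : ℕ) : Prop := ∀ (i : ι) (d : D), degD d ≤ n →
  F b (n+1) (b i) (zz d) = F b n (b i) (zz d)

/-- statement: leading term property of `F n` in degrees `≤ n` -/
def P2 (n : ℕ) : Prop := ∀ (i : ι) (d : D), degD d ≤ n →
  F b n (b i) (zz d) - zz (d + Finsupp.single i 1) ∈ W (K := K) (degD d)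

/-- extend an equality of the `G (b i)` on monomials to all of `L` and `W m` -/
lemma ext_GH (G H : L →ₗ[K] Module.End K P) {m : ℕ}
    (h : ∀ (i : ι) (d : D), degD d ≤ m → G (b i) (zz d) = H (b i) (zz d)) :
    ∀ x, ∀ p ∈ W (K := K) m, G x p = H x p := by
  have hbasis : ∀ (x : L) (d : D), degD d ≤ m → G x (zz d) = H x (zz d) := by
    intro x d hd
    have hext : G.flip (zz d) = H.flip (zz d) := b.ext fun i => h i d hd
    exact DFunLike.congr_fun hext x
  intro x p hp
  induction hp using Submodule.span_induction with
  | mem q hq => obtain ⟨d, hd, rfl⟩ := hq; exact hbasis x d hd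
  | zero => simp
  | add u v _ _ hu hv => rw [map_add, map_add, hu, hv]
  | smul a u _ hu => rw [map_smul, map_smul, hu]

/-- extend a membership property of `G (b i)` on monomials to all of `L` and `W m` -/
lemma mem_GH (G : L →ₗ[K] Module.End K P) {m k : ℕ}
    (h : ∀ (i : ι) (d : D), degD d ≤ m → G (b i) (zz d) ∈ W (K := K) k) :
    ∀ x, ∀ p ∈ W (K := K) m, G x p ∈ W (K := K) k := by
  have hbasis : ∀ (x : L) (d : D), degD d ≤ m → G x (zz d) ∈ W (K := K) k := by
    intro x d hd
    have hx : x ∈ Submodule.span K (Set.range b) := by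
      rw [b.span_eq]; trivial
    induction hx using Submodule.span_induction with
    | mem y hy => obtain ⟨i, rfl⟩ := hy; exact h i d hd
    | zero => simp
    | add u v _ _ hu hv => rw [map_add, LinearMap.add_apply]; exact add_mem hu hv
    | smul a u _ hu => rw [map_smul, LinearMap.smul_apply]; exact Submodule.smul_mem _ _ hu
  intro x p hp
  induction hp using Submodule.span_induction with
  | mem q hq => obtain ⟨d, hd, rfl⟩ := hq; exact hbasis x d hd
  | zero => simp
  | add u v _ _ hu hv => rw [map_add]; exact add_mem hu hv
  | smul a u _ hu => rw [map_smul]; exact Submodule.smul_mem _ _ hu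

lemma P1P2 : ∀ n : ℕ, P1 b n ∧ P2 (K := K) b n := by
  intro n
  induction n with
  | zero =>
    constructor
    · intro i d hd
      have h0 : d = 0 := degD_eq_zero (Nat.le_zero.mp hd)
      subst h0
      rw [F_succ_apply, Fval_zero, F_zero_apply, if_pos rfl]
    · intro i d hd
      have h0 : d = 0 := degD_eq_zero (Nat.le_zero.mp hd)
      subst h0
      rw [F_zero_apply, if_pos rfl, X_eq_zz, zero_add, sub_self]
      exact zero_mem _
  | succ n ih =>
    obtain ⟨ih1, ih2⟩ := ih
    have key : ∀ (i : ι) (d : D), degD d ≤ n + 1 → d ≠ 0 →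
        (F b (n+2) (b i) (zz d) = F b (n+1) (b i) (zz d) ∧
         F b (n+1) (b i) (zz d) - zz (d + Finsupp.single i 1) ∈ W (K := K) (degD d)) := by
      intro i d hd h0
      set j := minD d h0 with hj
      set d' := d - Finsupp.single j 1 with hd'
      have hdeg' : degD d' + 1 = degD d := degD_sub_single h0
      have hd'n : degD d' ≤ n := by omega
      set r : P := F b n (b i) (zz d') - zz (d' + Finsupp.single i 1) with hr
      have hrW : r ∈ W (K := K) (degD d') := ih2 i d' hd'n
      have hrWn : r ∈ W (K := K) n := W_mono hd'n hrW
      have e1 : F b (n+1) (b i) (zz d') = F b n (b i) (zz d') := ih1 i d' hd'n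
      have etr1 : trunc (n+1) r = r := trunc_of_mem_W (W_mono (by omega) hrW)
      have etr0 : trunc n r = r := trunc_of_mem_W hrWn
      have e2 : F b (n+1) (b j) r = F b n (b j) r :=
        ext_GH b _ _ (fun i' d'' hdd => ih1 i' d'' hdd) (b j) r hrWn
      have e3 : F b (n+1) ⁅b i, b j⁆ (zz d') = F b n ⁅b i, b j⁆ (zz d') :=
        ext_GH b _ _ (fun i' d'' hdd => ih1 i' d'' hdd) _ (zz d') (zz_mem_W hd'n)
      have eF2 : F b (n+2) (b i) (zz d) =
          zz (d + Finsupp.single i 1) +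
            (if i ≤ j then 0 else F b n (b j) r + F b n ⁅b i, b j⁆ (zz d')) := by
        rw [F_succ_apply, Fval_of b _ i (by omega) h0, ← hj, ← hd', e1, ← hr, etr1, e2, e3]
      have eF1 : F b (n+1) (b i) (zz d) =
          zz (d + Finsupp.single i 1) +
            (if i ≤ j then 0 else F b n (b j) r + F b n ⁅b i, b j⁆ (zz d')) := by
        rw [F_succ_apply, Fval_of b _ i (by omega) h0, ← hj, ← hd', ← hr, etr0]
      constructor
      · rw [eF2, eF1]
      · rw [eF1, add_sub_cancel_left]
        by_cases hij : i ≤ j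
        · rw [if_pos hij]; exact zero_mem _
        · rw [if_neg hij]
          have m1 : F b n (b j) r ∈ W (K := K) (degD d' + 1) :=
            mem_GH b _ (fun i' d'' hdd =>
              (by
                have := ih2 i' d'' (le_trans hdd hd'n)
                have hz : zz (K := K) (d'' + Finsupp.single i' 1) ∈ W (degD d' + 1) :=
                  zz_mem_W (by rw [degD_add, degD_single]; omega)
                have := add_mem (W_mono (by omega) this) hz
                simpa using this)) (b j) r hrW
          have m2 : F b n ⁅b i, b j⁆ (zz d') ∈ W (K := K) (degD d' + 1) :=
            mem_GH b _ (fun i' d'' hdd =>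
              (by
                have := ih2 i' d'' (le_trans hdd hd'n)
                have hz : zz (K := K) (d'' + Finsupp.single i' 1) ∈ W (degD d' + 1) :=
                  zz_mem_W (by rw [degD_add, degD_single]; omega)
                have := add_mem (W_mono (by omega) this) hz
                simpa using this)) _ (zz d') (zz_mem_W (le_refl _))
          rw [hdeg'] at m1 m2
          exact add_mem m1 m2
    constructor
    · intro i d hd
      by_cases h0 : d = 0
      · subst h0
        rw [F_succ_apply, Fval_zero, F_succ_apply, Fval_zero]
      · exact (key i d hd h0).1
    · intro i d hd
      by_cases h0 : d = 0
      · subst h0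
        rw [F_succ_apply, Fval_zero, X_eq_zz, zero_add, sub_self]
        exact zero_mem _
      · exact (key i d hd h0).2

lemma rho_eq_F {n : ℕ} {d : D} (hd : degD d ≤ n) (i : ι) :
    rho b (b i) (zz d) = F b n (b i) (zz d) := by
  induction n with
  | zero =>
    have : degD d = 0 := Nat.le_zero.mp hd
    rw [rho_apply, this]
  | succ n ih =>
    by_cases h : degD d ≤ n
    · rw [ih h, ← (P1P2 b n).1 i d h]
    · have : degD d = n + 1 := by omega
      rw [rho_apply, this]

lemma rho_B (i : ι) (d : D) :
    rho b (b i) (zz d) - zz (d + Finsupp.single i 1) ∈ W (K := K) (degD d) := by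
  rw [rho_apply]
  exact (P1P2 b (degD d)).2 i d (le_refl _)

lemma rho_W {m : ℕ} (x : L) {p : P} (hp : p ∈ W (K := K) m) :
    rho b x p ∈ W (K := K) (m + 1) := by
  refine mem_GH b _ (fun i d hd => ?_) x p hp
  have h1 := rho_B b i d
  have h2 : zz (K := K) (d + Finsupp.single i 1) ∈ W (m+1) :=
    zz_mem_W (by rw [degD_add, degD_single]; omega)
  have := add_mem (W_mono (by omega : degD d ≤ m+1) h1) h2
  simpa using this

lemma support_add_single_subset (d : D) (i : ι) :
    (d + Finsupp.single i 1).support ⊆ d.support ∪ {i} := by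
  classical
  intro k hk
  simp only [Finsupp.mem_support_iff, Finsupp.add_apply] at hk
  by_cases h : k = i
  · simp [h]
  · simp only [Finset.mem_union, Finset.mem_singleton, Finsupp.mem_support_iff]
    left
    intro hdk
    apply hk
    rw [hdk, Finsupp.single_apply, if_neg (fun hh => h hh.symm)]
    rfl

lemma rho_sorted (i : ι) (d : D) (h : ∀ k ∈ d.support, i ≤ k) :
    rho b (b i) (zz d) = zz (d + Finsupp.single i 1) := by
  by_cases h0 : d = 0
  · subst h0
    rw [rho_apply]
    have : degD (0 : D) = 0 := by simp [degD]
    rw [this, F_zero_apply, if_pos rfl, X_eq_zz, zero_add]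
  · have h1 : 1 ≤ degD d := by
      rcases Nat.eq_zero_or_pos (degD d) with h' | h'
      · exact absurd (degD_eq_zero h') h0
      · omega
    obtain ⟨m, hm⟩ : ∃ m, degD d = m + 1 := ⟨degD d - 1, by omega⟩
    rw [rho_apply, hm, F_succ_apply, Fval_of b _ i (by omega) h0,
      if_pos (h _ (minD_mem h0)), add_zero]

lemma rho_rec (i : ι) (d : D) (h0 : d ≠ 0) (hij : ¬ i ≤ minD d h0) :
    rho b (b i) (zz d) =
      rho b (b (minD d h0)) (rho b (b i) (zz (d - Finsupp.single (minD d h0) 1)))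
        + rho b ⁅b i, b (minD d h0)⁆ (zz (d - Finsupp.single (minD d h0) 1)) := by
  set j := minD d h0 with hj
  set d' := d - Finsupp.single j 1 with hd'
  have hdeg' : degD d' + 1 = degD d := degD_sub_single h0
  obtain ⟨m, hm⟩ : ∃ m, degD d = m + 1 := ⟨degD d - 1, by omega⟩
  have hd'm : degD d' = m := by omega
  set r : P := F b m (b i) (zz d') - zz (d' + Finsupp.single i 1) with hr
  have hrW : r ∈ W (K := K) m := by
    rw [← hd'm]; exact (P1P2 b m).2 i d' hd'm.le
  have etr : trunc m r = r := trunc_of_mem_W hrW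
  have hFm_rho : ∀ x, ∀ p ∈ W (K := K) m, F b m x p = rho b x p :=
    ext_GH b _ _ (fun i' d'' hdd => (rho_eq_F b hdd i').symm)
  have e0 : F b m (b i) (zz d') = rho b (b i) (zz d') :=
    (rho_eq_F b hd'm.le i).symm
  have hsupp' : d'.support ⊆ d.support := by
    intro k hk
    rw [Finsupp.mem_support_iff] at hk ⊢
    rw [hd', Finsupp.tsub_apply] at hk
    omega
  have hjd' : ∀ k ∈ d'.support, j ≤ k := fun k hk => minD_le h0 (hsupp' hk)
  have hsortj : rho b (b j) (zz (d' + Finsupp.single i 1))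
      = zz (d' + Finsupp.single i 1 + Finsupp.single j 1) := by
    refine rho_sorted b j _ (fun k hk => ?_)
    rcases Finset.mem_union.mp (support_add_single_subset d' i hk) with h' | h'
    · exact hjd' k h'
    · rw [Finset.mem_singleton.mp h']
      exact (not_le.mp hij).le
  have hdd : d' + Finsupp.single i 1 + Finsupp.single j 1 = d + Finsupp.single i 1 := by
    conv_rhs => rw [← single_minD_add_sub h0]
    rw [← hj, ← hd']
    abel
  rw [rho_apply, hm, F_succ_apply, Fval_of b _ i (by omega) h0, ← hj, ← hd', if_neg hij]
  rw [← hr, etr]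
  rw [hFm_rho (b j) r hrW, hFm_rho ⁅b i, b j⁆ (zz d') (zz_mem_W hd'm.le)]
  have expand : rho b (b i) (zz d') = zz (d' + Finsupp.single i 1) + (r : P) := by
    rw [hr, e0]; abel
  rw [expand, map_add, hsortj, hdd]
  abel

/-- the commutator identity we must establish -/
def Key (x y : L) (p : P) : Prop :=
  rho b x (rho b y p) - rho b y (rho b x p) = rho b ⁅x, y⁆ p

lemma key_antisymm {x y : L} {p : P} (h : Key b x y p) : Key b y x p := by
  unfold Key at h ⊢
  have : ⁅y, x⁆ = -⁅x, y⁆ := (lie_skew y x).symm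
  rw [this, map_neg, LinearMap.neg_apply, ← h]
  abel

lemma key_smul {x y : L} {p : P} (a : K) (h : Key b x y p) : Key b x y (a • p) := by
  unfold Key at h ⊢
  simp only [map_smul, ← smul_sub, h]

lemma key_add {x y : L} {p q : P} (h : Key b x y p) (h' : Key b x y q) :
    Key b x y (p + q) := by
  unfold Key at h h' ⊢
  simp only [map_add]
  rw [← h, ← h']
  abel

lemma key_zero (x y : L) : Key b x y 0 := by unfold Key; simp

lemma key_addx {x x' y : L} {p : P} (h : Key b x y p) (h' : Key b x' y p) :
    Key b (x + x') y p := by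
  unfold Key at h h' ⊢
  simp only [map_add, LinearMap.add_apply, add_lie]
  rw [← h, ← h']
  abel

lemma key_smulx {x y : L} {p : P} (a : K) (h : Key b x y p) : Key b (a • x) y p := by
  unfold Key at h ⊢
  simp only [map_smul, LinearMap.smul_apply, smul_lie, ← smul_sub, h]

lemma key_addy {x y y' : L} {p : P} (h : Key b x y p) (h' : Key b x y' p) :
    Key b x (y + y') p :=
  key_antisymm b (key_addx b (key_antisymm b h) (key_antisymm b h'))

lemma key_smuly {x y : L} {p : P} (a : K) (h : Key b x y p) : Key b x (a • y) p :=
  key_antisymm b (key_smulx b a (key_antisymm b h))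

lemma key_zerox (y : L) (p : P) : Key b 0 y p := by
  unfold Key; simp

lemma key_zeroy (x : L) (p : P) : Key b x 0 p :=
  key_antisymm b (key_zerox b x p)

lemma key_self (x : L) (p : P) : Key b x x p := by unfold Key; simp

/-- reduction to basis vectors -/
lemma key_of_basis {p : P} (h : ∀ i k : ι, Key b (b i) (b k) p) :
    ∀ x y : L, Key b x y p := by
  have hx : ∀ (x : L), x ∈ Submodule.span K (Set.range b) → ∀ k, Key b x (b k) p := by
    intro x hx
    induction hx using Submodule.span_induction with
    | mem u hu => obtain ⟨i, rfl⟩ := hu; exact fun k => h i k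
    | zero => intro k; exact key_zerox b _ _
    | add u v _ _ hu hv => exact fun k => key_addx b (hu k) (hv k)
    | smul a u _ hu => exact fun k => key_smulx b a (hu k)
  intro x y
  have hx' : ∀ k, Key b x (b k) p :=
    hx x (by rw [b.span_eq]; trivial)
  have hy : ∀ (y : L), y ∈ Submodule.span K (Set.range b) → Key b x y p := by
    intro y hy
    induction hy using Submodule.span_induction with
    | mem u hu => obtain ⟨k, rfl⟩ := hu; exact hx' k
    | zero => exact key_zeroy b _ _
    | add u v _ _ hu hv => exact key_addy b hu hv
    | smul a u _ hu => exact key_smuly b a hu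
  exact hy y (by rw [b.span_eq]; trivial)

/-- the case where one index is below the support -/
lemma key_alpha {i k : ι} {d : D} (hk : ∀ l ∈ d.support, k ≤ l) (hki : k < i) :
    Key b (b i) (b k) (zz d) := by
  unfold Key
  have hsort : rho b (b k) (zz d) = zz (d + Finsupp.single k 1) := rho_sorted b k d hk
  have hne : d + Finsupp.single k 1 ≠ 0 := by
    intro hcontra
    have := DFunLike.congr_fun hcontra k
    simp [Finsupp.single_apply] at this
  have hminmem := minD_mem hne
  have hmin : minD (d + Finsupp.single k 1) hne = k := by
    apply le_antisymm
    · apply minD_le hne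
      rw [Finsupp.mem_support_iff]
      simp [Finsupp.single_apply]
    · rcases Finset.mem_union.mp (support_add_single_subset d k hminmem) with h' | h'
      · exact hk _ h'
      · exact le_of_eq (Finset.mem_singleton.mp h').symm
  have hsub : (d + Finsupp.single k 1) - Finsupp.single k 1 = d := by
    ext l
    simp
  have := rho_rec b i (d + Finsupp.single k 1) hne (by rw [hmin]; exact not_le.mpr hki)
  rw [hmin, hsub] at this
  rw [hsort, this]
  abel

lemma key_min {i k : ι} {d : D} (hmin : ∀ l ∈ d.support, min i k ≤ l) :
    Key b (b i) (b k) (zz d) := by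
  rcases lt_trichotomy i k with h | h | h
  · exact key_antisymm b (key_alpha b (fun l hl => le_trans (le_min le_rfl h.le) (hmin l hl)) h)
  · subst h; exact key_self b _ _
  · exact key_alpha b (fun l hl => le_trans (le_min h.le le_rfl) (hmin l hl)) h

/-- Main theorem: `rho` is a Lie algebra representation. -/
lemma key_all : ∀ (n : ℕ) (p : P), p ∈ W (K := K) n → ∀ x y : L, Key b x y p := by
  intro n
  induction n with
  | zero =>
    intro p hp
    induction hp using Submodule.span_induction with
    | mem q hq =>
      obtain ⟨d, hd, rfl⟩ := hq
      have h0 : d = 0 := degD_eq_zero (Nat.le_zero.mp hd)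
      subst h0
      refine key_of_basis b (fun i k => key_min b ?_) 
      simp
    | zero => exact fun x y => key_zero b x y
    | add u v _ _ hu hv => exact fun x y => key_add b (hu x y) (hv x y)
    | smul a u _ hu => exact fun x y => key_smul b a (hu x y)
  | succ n ih =>
    intro p hp
    induction hp using Submodule.span_induction with
    | zero => exact fun x y => key_zero b x y
    | add u v _ _ hu hv => exact fun x y => key_add b (hu x y) (hv x y)
    | smul a u _ hu => exact fun x y => key_smul b a (hu x y)
    | mem q hq =>
      obtain ⟨d, hd, rfl⟩ := hq
      by_cases hdn : degD d ≤ n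
      · exact ih (zz d) (zz_mem_W hdn)
      refine key_of_basis b (fun i k => ?_)
      by_cases h0 : d = 0
      · subst h0; exact key_min b (by simp)
      set j := minD d h0 with hj
      by_cases hmin : min i k ≤ j
      · exact key_min b (fun l hl => le_trans hmin (minD_le h0 hl))
      have hjk : j < k := lt_of_lt_of_le (not_le.mp hmin) (min_le_right i k)
      have hji : j < i := lt_of_lt_of_le (not_le.mp hmin) (min_le_left i k)
      set d' := d - Finsupp.single j 1 with hd'
      have hdeg' : degD d' = n := by
        have h' := degD_sub_single h0
        rw [← hj, ← hd'] at h'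
        have hdle : degD d ≤ n + 1 := hd
        omega
      have hsupp' : d'.support ⊆ d.support := by
        intro l hl
        rw [Finsupp.mem_support_iff] at hl ⊢
        rw [hd', Finsupp.tsub_apply] at hl
        omega
      have hjd' : ∀ l ∈ d'.support, j ≤ l := fun l hl => minD_le h0 (hsupp' hl)
      have hzd : rho b (b j) (zz d') = zz d := by
        rw [rho_sorted b j d' hjd']
        congr 1
        conv_rhs => rw [← single_minD_add_sub h0, ← hj, ← hd']
        abel
      have hWd' : zz d' ∈ W (K := K) n := zz_mem_W hdeg'.le
      have hrW : ∀ l : ι, rho b (b l) (zz d') - zz (d' + Finsupp.single l 1)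
          ∈ W (K := K) n := fun l => by
        have := rho_B b l d'
        rwa [hdeg'] at this
      have step : ∀ i' k' : ι, j < i' → j < k' →
          rho b (b i') (rho b (b k') (zz d)) =
            rho b (b j) (rho b (b i') (rho b (b k') (zz d')))
            + rho b ⁅b i', b j⁆ (rho b (b k') (zz d'))
            + rho b (b i') (rho b ⁅b k', b j⁆ (zz d')) := by
        intro i' k' hi' hk'
        have hK1 : Key b (b k') (b j) (zz d') :=
          key_min b (fun l hl => le_trans (min_le_right _ _) (hjd' l hl))
        unfold Key at hK1
        have s1 : rho b (b k') (zz d)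
            = rho b (b j) (rho b (b k') (zz d')) + rho b ⁅b k', b j⁆ (zz d') := by
          rw [← hzd]
          linear_combination hK1
        have k1 : Key b (b i') (b j) (zz (d' + Finsupp.single k' 1)) := by
          refine key_min b (fun l hl => ?_)
          rcases Finset.mem_union.mp (support_add_single_subset d' k' hl) with h' | h'
          · exact le_trans (min_le_right _ _) (hjd' l h')
          · rw [Finset.mem_singleton.mp h']
            exact le_trans (min_le_right _ _) hk'.le
        have k2 : Key b (b i') (b j)
            (rho b (b k') (zz d') - zz (d' + Finsupp.single k' 1)) :=
          ih _ (hrW k') _ _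
        have hKij := key_add b k1 k2
        rw [add_sub_cancel] at hKij
        unfold Key at hKij
        have s2 := congrArg (fun q => rho b (b i') q) s1
        simp only [map_add] at s2
        rw [s2]
        linear_combination hKij
      have stepik := step i k hji hjk
      have stepki := step k i hjk hji
      have hIK : Key b (b i) (b k) (zz d') := ih _ hWd' _ _
      have hJij : Key b ⁅b i, b j⁆ (b k) (zz d') := ih _ hWd' _ _
      have hJkj : Key b (b i) ⁅b k, b j⁆ (zz d') := ih _ hWd' _ _
      have hJik : Key b (b j) ⁅b i, b k⁆ (zz d') := ih _ hWd' _ _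
      unfold Key at hIK hJij hJkj hJik ⊢
      have hrj := congrArg (fun q => rho b (b j) q) hIK
      simp only [map_sub] at hrj
      have hJac : ⁅b j, ⁅b i, b k⁆⁆ + ⁅⁅b i, b j⁆, b k⁆ + ⁅b i, ⁅b k, b j⁆⁆ = (0 : L) := by
        have h1 : ⁅b i, ⁅b k, b j⁆⁆ = -⁅b i, ⁅b j, b k⁆⁆ := by
          rw [← lie_skew (b k) (b j), lie_neg]
        have h2 : ⁅b i, ⁅b j, b k⁆⁆ = ⁅⁅b i, b j⁆, b k⁆ + ⁅b j, ⁅b i, b k⁆⁆ :=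
          leibniz_lie _ _ _
        rw [h1, h2]
        abel
      have hJacP := congrArg (fun v => rho b v (zz d')) hJac
      simp only [map_add, map_zero, LinearMap.add_apply, LinearMap.zero_apply] at hJacP
      rw [hzd] at hJik
      linear_combination stepik - stepki + hrj + hJij + hJkj + hJik + hJacP
section Uside

/-- the symmetrization multilinear map -/
noncomputable def SymT (n : ℕ) : MultilinearMap K (fun _ : Fin n => L) UEA :=
  (n.factorial : K)⁻¹ • ∑ σ : Equiv.Perm (Fin n),
    (((MultilinearMap.mkPiAlgebraFin K n UEA).compLinearMap
      (fun _ => (UniversalEnvelopingAlgebra.ι K (L := L)).toLinearMap)).domDomCongr σ)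

lemma SymT_apply (n : ℕ) (x : Fin n → L) :
    SymT (K := K) (L := L) n x = (n.factorial : K)⁻¹ • ∑ σ : Equiv.Perm (Fin n),
      (List.ofFn fun i => UniversalEnvelopingAlgebra.ι K (x (σ i))).prod := by
  simp [SymT, MultilinearMap.domDomCongr, Function.comp]

lemma SymT_comp_perm (n : ℕ) (x : Fin n → L) (σ : Equiv.Perm (Fin n)) :
    SymT (K := K) n (x ∘ σ) = SymT (K := K) n x := by
  rw [SymT_apply, SymT_apply]
  congr 1
  have := Equiv.sum_comp (Equiv.mulLeft σ)
    (fun τ : Equiv.Perm (Fin n) =>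
      (List.ofFn fun i => UniversalEnvelopingAlgebra.ι K (x (τ i))).prod)
  rw [← this]
  refine Finset.sum_congr rfl fun τ _ => ?_
  simp [Equiv.Perm.mul_apply, Function.comp]

/-- products of generators -/
noncomputable def listProdU (w : List L) : UEA :=
  (w.map (fun x => (UniversalEnvelopingAlgebra.ι K x : UEA))).prod

lemma listProdU_nil : listProdU (K := K) (L := L) [] = 1 := by simp [listProdU]

lemma listProdU_cons (x : L) (w : List L) :
    listProdU (K := K) (x :: w) = UniversalEnvelopingAlgebra.ι K x * listProdU (K := K) w := by
  simp [listProdU]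

lemma listProdU_ofFn {n : ℕ} (x : Fin n → L) :
    listProdU (K := K) (List.ofFn x)
      = (List.ofFn fun i => UniversalEnvelopingAlgebra.ι K (x i)).prod := by
  rw [listProdU, List.map_ofFn]
  rfl

/-- filtration of `U(g)` by spans of monomials of bounded length -/
noncomputable def MU (m : ℕ) : Submodule K UEA :=
  Submodule.span K {u : UEA | ∃ w : List L, w.length ≤ m ∧ listProdU (K := K) w = u}

lemma listProdU_mem_MU {w : List L} {m : ℕ} (h : w.length ≤ m) :
    listProdU (K := K) w ∈ MU (K := K) m :=
  Submodule.subset_span ⟨w, h, rfl⟩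

lemma MU_mono {m m' : ℕ} (h : m ≤ m') : MU (K := K) (L := L) m ≤ MU m' :=
  Submodule.span_mono (fun u ⟨w, hw, he⟩ => ⟨w, le_trans hw h, he⟩)

lemma iota_mul_MU {m : ℕ} (x : L) {u : UEA} (hu : u ∈ MU (K := K) m) :
    UniversalEnvelopingAlgebra.ι K x * u ∈ MU (K := K) (m + 1) := by
  induction hu using Submodule.span_induction with
  | mem q hq =>
    obtain ⟨w, hw, rfl⟩ := hq
    rw [← listProdU_cons]
    exact listProdU_mem_MU (by simpa using Nat.succ_le_succ hw)
  | zero => rw [mul_zero]; exact zero_mem _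
  | add u v _ _ hu hv => rw [mul_add]; exact add_mem hu hv
  | smul a u _ hu => rw [mul_smul_comm]; exact Submodule.smul_mem _ _ hu

lemma iota_bracket (x y : L) :
    (UniversalEnvelopingAlgebra.ι K ⁅x, y⁆ : UEA)
      = UniversalEnvelopingAlgebra.ι K x * UniversalEnvelopingAlgebra.ι K y
        - UniversalEnvelopingAlgebra.ι K y * UniversalEnvelopingAlgebra.ι K x := by
  rw [LieHom.map_lie, LieRing.of_associative_ring_bracket]

lemma perm_congr_listProdU : ∀ {l l' : List L}, l.Perm l' →
    listProdU (K := K) l - listProdU (K := K) l' ∈ MU (K := K) (l.length - 1) := by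
  intro l l' h
  induction h with
  | nil => rw [sub_self]; exact zero_mem _
  | cons x h ih =>
    rename_i l₁ l₂
    rcases Nat.eq_zero_or_pos l₁.length with h0 | h0
    · have : l₁ = [] := List.length_eq_zero_iff.mp h0
      subst this
      have : l₂ = [] := List.perm_nil.mp h.symm
      subst this
      rw [sub_self]
      exact zero_mem _
    · rw [listProdU_cons, listProdU_cons, ← mul_sub]
      have := iota_mul_MU (K := K) x ih
      have hle : l₁.length - 1 + 1 ≤ (x :: l₁).length - 1 := by
        simp only [List.length_cons]
        omega
      exact MU_mono hle this
  | swap a b t =>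
    rw [listProdU_cons, listProdU_cons, listProdU_cons, listProdU_cons,
      ← mul_assoc, ← mul_assoc, ← sub_mul, ← iota_bracket]
    rw [← listProdU_cons]
    refine listProdU_mem_MU ?_
    simp
  | trans h1 h2 ih1 ih2 =>
    rename_i l₁ l₂ l₃
    have hlen : l₁.length = l₂.length := h1.length_eq
    have : listProdU (K := K) l₁ - listProdU (K := K) l₃
        = (listProdU (K := K) l₁ - listProdU (K := K) l₂)
          + (listProdU (K := K) l₂ - listProdU (K := K) l₃) := by abel
    rw [this]
    exact add_mem ih1 (by rw [hlen]; exact ih2)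

lemma ofFn_comp_perm {α : Type*} {n : ℕ} (x : Fin n → α) (σ : Equiv.Perm (Fin n)) :
    (List.ofFn (x ∘ σ)).Perm (List.ofFn x) := by
  classical
  have h1 : (List.ofFn (⇑σ)).Perm (List.ofFn (id : Fin n → Fin n)) := by
    apply List.perm_of_nodup_nodup_toFinset_eq
    · exact List.nodup_ofFn.mpr σ.injective
    · exact List.nodup_ofFn.mpr fun _ _ h => h
    · ext k
      simp [List.mem_ofFn, σ.surjective k]
  have := h1.map x
  rwa [List.map_ofFn, List.map_ofFn] at this

lemma SymT_sub_mem {n : ℕ} (x : Fin n → L) :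
    SymT (K := K) n x - listProdU (K := K) (List.ofFn x) ∈ MU (K := K) (n - 1) := by
  classical
  have hmem : ∀ σ : Equiv.Perm (Fin n),
      listProdU (K := K) (List.ofFn (x ∘ σ)) - listProdU (K := K) (List.ofFn x)
        ∈ MU (K := K) (n - 1) := fun σ => by
    have := perm_congr_listProdU (K := K) (ofFn_comp_perm x σ)
    rwa [List.length_ofFn] at this
  have hfact : ((n.factorial : K))⁻¹ * (n.factorial : K) = 1 :=
    inv_mul_cancel₀ (Nat.cast_ne_zero.mpr (Nat.factorial_ne_zero n))
  have e1 : ∀ σ : Equiv.Perm (Fin n), listProdU (K := K) (List.ofFn (x ∘ σ))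
      = (List.ofFn fun i => UniversalEnvelopingAlgebra.ι K (x (σ i))).prod := fun σ => by
    rw [listProdU_ofFn]
    rfl
  have heq : SymT (K := K) n x - listProdU (K := K) (List.ofFn x)
      = (n.factorial : K)⁻¹ • ∑ σ : Equiv.Perm (Fin n),
          (listProdU (K := K) (List.ofFn (x ∘ σ)) - listProdU (K := K) (List.ofFn x)) := by
    rw [Finset.sum_sub_distrib, Finset.sum_const, smul_sub, SymT_apply]
    congr 1
    · congr 1
      exact Finset.sum_congr rfl fun σ _ => (e1 σ).symm
    · rw [Finset.card_univ, ← Nat.cast_smul_eq_nsmul K, smul_smul]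
      have hcard : (Fintype.card (Equiv.Perm (Fin n)) : K) = (n.factorial : K) := by
        rw [Fintype.card_perm, Fintype.card_fin]
      rw [hcard, hfact, one_smul]
  rw [heq]
  exact Submodule.smul_mem _ _ (Submodule.sum_mem _ fun σ _ => hmem σ)

end Uside

section Theta

lemma mem_W_of_le (p : P) {m : ℕ} (hm : p.totalDegree ≤ m) : p ∈ W (K := K) m := by
  classical
  rw [p.as_sum]
  refine Submodule.sum_mem _ fun d hd => ?_
  have : monomial d (coeff d p) = (coeff d p) • zz (K := K) d := by
    simp [zz, smul_monomial]
  rw [this]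
  refine Submodule.smul_mem _ _ (zz_mem_W ?_)
  exact le_trans (Finset.le_sup (f := fun s : D => s.sum fun _ e => e) hd) hm

lemma mem_W_totalDegree (p : P) : p ∈ W (K := K) p.totalDegree :=
  mem_W_of_le p le_rfl

/-- `rho` as a morphism of Lie algebras -/
noncomputable def rhoLie : L →ₗ⁅K⁆ Module.End K P :=
  { rho b with
    map_lie' := by
      intro x y
      refine LinearMap.ext fun p => ?_
      have h := key_all b p.totalDegree p (mem_W_totalDegree p) x y
      unfold Key at h
      rw [Ring.lie_def]
      simp only [LinearMap.sub_apply, Module.End.mul_apply]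
      exact h.symm }

/-- the induced algebra morphism `U(g) → End(P)` -/
noncomputable def piU : UEA →ₐ[K] Module.End K P :=
  UniversalEnvelopingAlgebra.lift K (rhoLie b)

/-- evaluation of the `U(g)`-action at `1 ∈ P` -/
noncomputable def theta : UEA →ₗ[K] P where
  toFun u := piU b u 1
  map_add' u v := by simp [map_add]
  map_smul' a u := by simp [map_smul]

lemma theta_one : theta b (1 : UEA) = 1 := by
  simp [theta]

lemma theta_iota_mul (x : L) (u : UEA) :
    theta b (UniversalEnvelopingAlgebra.ι K x * u) = rho b x (theta b u) := by
  have : piU b (UniversalEnvelopingAlgebra.ι K x) = rhoLie b x :=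
    UniversalEnvelopingAlgebra.lift_ι_apply K (rhoLie b) x
  simp only [theta, LinearMap.coe_mk, AddHom.coe_mk, map_mul, this]
  rfl

lemma zz_zero : zz (K := K) (ι := ι) 0 = 1 := by
  simp [zz]

lemma theta_listProdU_mem (w : List L) :
    theta b (listProdU (K := K) w) ∈ W (K := K) (ι := ι) w.length := by
  induction w with
  | nil =>
    rw [listProdU_nil, theta_one, ← zz_zero]
    exact zz_mem_W (by simp [degD])
  | cons x t ih =>
    rw [listProdU_cons, theta_iota_mul]
    exact rho_W b x ih

lemma theta_MU {m : ℕ} {u : UEA} (hu : u ∈ MU (K := K) m) :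
    theta b u ∈ W (K := K) (ι := ι) m := by
  induction hu using Submodule.span_induction with
  | mem q hq =>
    obtain ⟨w, hw, rfl⟩ := hq
    exact W_mono hw (theta_listProdU_mem b w)
  | zero => simp
  | add u v _ _ hu hv => rw [map_add]; exact add_mem hu hv
  | smul a u _ hu => rw [map_smul]; exact Submodule.smul_mem _ _ hu

/-- the exponent Finsupp associated to a list of indices -/
noncomputable def dOf (w : List ι) : D := Multiset.toFinsupp (↑w : Multiset ι)

lemma dOf_nil : dOf ([] : List ι) = 0 := by simp [dOf]

lemma dOf_cons (j : ι) (w : List ι) :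
    dOf (j :: w) = Finsupp.single j 1 + dOf w := by
  classical
  simp only [dOf]
  rw [show ((j :: w : List ι) : Multiset ι) = {j} + (↑w : Multiset ι) from rfl,
    Multiset.toFinsupp_add, Multiset.toFinsupp_singleton]

lemma support_dOf (w : List ι) : (dOf w).support = w.toFinset := by
  classical
  simp [dOf, Multiset.toFinsupp_support]

lemma theta_sorted : ∀ (w : List ι), w.Pairwise (· ≤ ·) →
    theta b (listProdU (K := K) (w.map b)) = zz (dOf w) := by
  intro w
  induction w with
  | nil => intro _; rw [List.map_nil, listProdU_nil, theta_one, dOf_nil, zz_zero]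
  | cons j t ih =>
    intro hsort
    obtain ⟨hj, hsort'⟩ := List.pairwise_cons.mp hsort
    rw [List.map_cons, listProdU_cons, theta_iota_mul, ih hsort']
    rw [rho_sorted b j (dOf t) (fun k hk => hj k (by
      rw [support_dOf] at hk
      exact List.mem_toFinset.mp hk))]
    rw [dOf_cons]
    congr 1
    abel


end Theta

section Phi

/-- the sorted word of an exponent -/
noncomputable def wordOf (d : D) : List ι := Multiset.sort (Finsupp.toMultiset d) (· ≤ ·)

lemma wordOf_sorted (d : D) : (wordOf d).Pairwise (· ≤ ·) := Multiset.pairwise_sort _ _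

lemma dOf_wordOf (d : D) : dOf (wordOf d) = d := by
  classical
  simp [dOf, wordOf, Multiset.sort_eq]

lemma length_wordOf (d : D) : (wordOf d).length = degD d := by
  classical
  rw [wordOf, Multiset.length_sort, Finsupp.card_toMultiset]
  rfl

/-- symmetrization of a list -/
noncomputable def SymL (w : List L) : UEA := SymT (K := K) w.length w.get

lemma SymT_cast {m n : ℕ} (h : m = n) (x : Fin n → L) :
    SymT (K := K) m (x ∘ (finCongr h : Fin m ≃ Fin n)) = SymT (K := K) n x := by
  subst h
  congr 1

lemma SymL_ofFn {n : ℕ} (x : Fin n → L) : SymL (List.ofFn x) = SymT (K := K) n x := by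
  rw [SymL]
  have hx : (List.ofFn x).get = x ∘ (finCongr (List.length_ofFn (f := x)) : Fin (List.ofFn x).length ≃ Fin n) := by
    funext i
    rw [List.get_ofFn]
    rfl
  rw [hx, SymT_cast]

noncomputable def phi : P →ₗ[K] UEA :=
  (basisMonomials ι K).constr K fun d => SymL ((wordOf d).map b)

lemma phi_zz (d : D) : phi b (zz d) = SymL ((wordOf d).map b) := by
  rw [zz_eq_basis, phi, Module.Basis.constr_basis]

lemma SymT_zero (x : Fin 0 → L) : SymT (K := K) 0 x = 1 := by
  rw [SymT_apply]
  simp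

lemma phi_zz_zero : phi b (zz 0) = 1 := by
  rw [phi_zz]
  have : wordOf (0 : D) = [] := by
    simp [wordOf]
  rw [this, List.map_nil, SymL]
  exact SymT_zero _

lemma word_eq_sorted_ofFn {n : ℕ} (g : Fin n → ι) :
    wordOf (dOf (List.ofFn g)) = List.ofFn (g ∘ Tuple.sort g) := by
  classical
  refine List.Perm.eq_of_pairwise (fun a b _ _ h1 h2 => le_antisymm h1 h2) (wordOf_sorted _)
    ((List.sortedLE_ofFn_iff.mpr (Tuple.monotone_sort g)).pairwise) ?_
  · rw [← Multiset.coe_eq_coe]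
    rw [show ((wordOf (dOf (List.ofFn g)) : List ι) : Multiset ι)
        = Finsupp.toMultiset (dOf (List.ofFn g)) from Multiset.sort_eq _ _]
    rw [show Finsupp.toMultiset (dOf (List.ofFn g)) = ((List.ofFn g : List ι) : Multiset ι) by
      simp [dOf]]
    rw [Multiset.coe_eq_coe]
    exact (ofFn_comp_perm g (Tuple.sort g)).symm

lemma phi_zz_ofFn {n : ℕ} (g : Fin n → ι) :
    phi b (zz (dOf (List.ofFn g))) = SymT (K := K) n (b ∘ g) := by
  rw [phi_zz, word_eq_sorted_ofFn, List.map_ofFn, SymL_ofFn]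
  have : b ∘ (g ∘ (Tuple.sort g)) = (b ∘ g) ∘ (Tuple.sort g) := rfl
  rw [this, SymT_comp_perm]

lemma multilinear_mem_span {n : ℕ} (f : MultilinearMap K (fun _ : Fin n => L) UEA)
    (x : Fin n → L) :
    f x ∈ Submodule.span K (Set.range fun g : Fin n → ι => f (fun i => b (g i))) := by
  classical
  have hx : x = fun i => ∑ j ∈ (b.repr (x i)).support, (b.repr (x i)) j • b j := by
    funext i
    conv_lhs => rw [← b.linearCombination_repr (x i)]
    rw [Finsupp.linearCombination_apply, Finsupp.sum]
  rw [hx, f.map_sum_finset]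
  refine Submodule.sum_mem _ fun r _ => ?_
  rw [f.map_smul_univ]
  exact Submodule.smul_mem _ _ (Submodule.subset_span ⟨fun i => r i, rfl⟩)

lemma SymT_mem_range_phi {n : ℕ} (x : Fin n → L) :
    SymT (K := K) n x ∈ LinearMap.range (phi b) := by
  have hsub : Set.range (fun g : Fin n → ι => SymT (K := K) n (fun i => b (g i)))
      ⊆ (LinearMap.range (phi b) : Set UEA) := by
    rintro _ ⟨g, rfl⟩
    exact ⟨zz (dOf (List.ofFn g)), phi_zz_ofFn b g⟩
  have h := multilinear_mem_span b (SymT (K := K) n) x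
  exact Submodule.span_le.mpr hsub h

lemma MU_le_range_phi : ∀ m : ℕ, MU (K := K) m ≤ LinearMap.range (phi b) := by
  intro m
  induction m using Nat.strong_induction_on with
  | _ m IH =>
    refine Submodule.span_le.mpr ?_
    rintro _ ⟨w, hw, rfl⟩
    have hof : listProdU (K := K) w = listProdU (K := K) (List.ofFn w.get) := by
      rw [List.ofFn_get]
    rcases Nat.eq_zero_or_pos m with h0 | h0
    · subst h0
      have : w = [] := List.length_eq_zero_iff.mp (Nat.le_zero.mp hw)
      subst this
      exact ⟨zz 0, by rw [phi_zz_zero, listProdU_nil]⟩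
    · by_cases hw' : w.length ≤ m - 1
      · exact IH (m - 1) (by omega) (listProdU_mem_MU hw')
      · have hdiff := SymT_sub_mem (K := K) w.get
        rw [List.ofFn_get] at hdiff
        have h1 : SymT (K := K) w.length w.get ∈ LinearMap.range (phi b) :=
          SymT_mem_range_phi b w.get
        have h2 : SymT (K := K) w.length w.get - listProdU (K := K) w
            ∈ LinearMap.range (phi b) :=
          IH (w.length - 1) (by omega) hdiff
        have : listProdU (K := K) w
            = SymT (K := K) w.length w.get
              - (SymT (K := K) w.length w.get - listProdU (K := K) w) := by abel
        rw [this]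
        exact sub_mem h1 h2


lemma listProdU_append (w w' : List L) :
    listProdU (K := K) (w ++ w') = listProdU (K := K) w * listProdU (K := K) w' := by
  rw [listProdU, listProdU, listProdU, List.map_append, List.prod_append]

lemma MU_mul {m m' : ℕ} {u v : UEA} (hu : u ∈ MU (K := K) m) (hv : v ∈ MU (K := K) m') :
    u * v ∈ MU (K := K) (m + m') := by
  induction hu using Submodule.span_induction with
  | mem s hs =>
    obtain ⟨w, hw, rfl⟩ := hs
    induction hv using Submodule.span_induction with
    | mem t ht =>
      obtain ⟨w', hw', rfl⟩ := ht
      rw [← listProdU_append]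
      exact listProdU_mem_MU (by simp only [List.length_append]; omega)
    | zero => rw [mul_zero]; exact zero_mem _
    | add u v _ _ hu hv => rw [mul_add]; exact add_mem hu hv
    | smul a u _ hu => rw [mul_smul_comm]; exact Submodule.smul_mem _ _ hu
  | zero => rw [zero_mul]; exact zero_mem _
  | add u v _ _ hu hv => rw [add_mul]; exact add_mem hu hv
  | smul a u _ hu => rw [smul_mul_assoc]; exact Submodule.smul_mem _ _ hu

lemma exists_MU (u : UEA) : ∃ m, u ∈ MU (K := K) m := by
  have hsurj : Function.Surjective (UniversalEnvelopingAlgebra.mkAlgHom K L) :=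
    RingCon.mkₐ_surjective _
  obtain ⟨a, rfl⟩ := hsurj u
  induction a using TensorAlgebra.induction with
  | algebraMap r =>
    refine ⟨0, ?_⟩
    rw [AlgHom.commutes]
    rw [Algebra.algebraMap_eq_smul_one]
    exact Submodule.smul_mem _ _ (by rw [← listProdU_nil (K := K) (L := L)]; exact listProdU_mem_MU le_rfl)
  | ι x =>
    refine ⟨1, ?_⟩
    have : UniversalEnvelopingAlgebra.mkAlgHom K L (TensorAlgebra.ι K x)
        = listProdU (K := K) [x] := by
      rw [listProdU_cons, listProdU_nil, mul_one]
      rfl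
    rw [this]
    exact listProdU_mem_MU (by simp)
  | mul a c ha hc =>
    obtain ⟨m, hm⟩ := ha
    obtain ⟨m', hm'⟩ := hc
    exact ⟨m + m', by rw [map_mul]; exact MU_mul hm hm'⟩
  | add a c ha hc =>
    obtain ⟨m, hm⟩ := ha
    obtain ⟨m', hm'⟩ := hc
    refine ⟨max m m', ?_⟩
    rw [map_add]
    exact add_mem (MU_mono (le_max_left _ _) hm) (MU_mono (le_max_right _ _) hm')

lemma phi_surjective : Function.Surjective (phi b) := by
  intro u
  obtain ⟨m, hm⟩ := exists_MU (K := K) u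
  exact MU_le_range_phi b m hm

lemma coeff_W {m : ℕ} {p : P} (hp : p ∈ W (K := K) m) {c : D} (hc : m < degD c) :
    coeff c p = 0 := by
  classical
  induction hp using Submodule.span_induction with
  | mem q hq =>
    obtain ⟨d, hd, rfl⟩ := hq
    have hdc : d ≠ c := fun h => by
      subst h
      exact absurd hd (by simpa using hc.not_ge)
    simp only [zz]
    rw [coeff_monomial, if_neg hdc]
  | zero => simp
  | add u v _ _ hu hv => rw [coeff_add, hu, hv, add_zero]
  | smul a u _ hu => rw [coeff_smul, hu, smul_zero]

lemma theta_phi_zz (d : D) :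
    ∃ q ∈ W (K := K) (degD d - 1),
      theta b (phi b (zz d)) = zz d + q ∧ (d = 0 → q = 0) := by
  by_cases h0 : d = 0
  · refine ⟨0, zero_mem _, ?_, fun _ => rfl⟩
    subst h0
    rw [phi_zz_zero, theta_one, zz_zero, add_zero]
  · set w : List L := (wordOf d).map b with hw
    have hlen : w.length = degD d := by
      rw [hw, List.length_map, length_wordOf]
    have hphi : phi b (zz d) = SymT (K := K) w.length w.get := phi_zz b d
    have hdiff := SymT_sub_mem (K := K) w.get
    rw [List.ofFn_get] at hdiff
    refine ⟨theta b (SymT (K := K) w.length w.get - listProdU (K := K) w), ?_, ?_, ?_⟩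
    · have := theta_MU b (MU_mono (by omega : w.length - 1 ≤ degD d - 1) hdiff)
      exact this
    · rw [hphi]
      have hsort := theta_sorted b (wordOf d) (wordOf_sorted d)
      rw [dOf_wordOf] at hsort
      rw [← hw] at hsort
      rw [map_sub, hsort]
      abel
    · intro h; exact absurd h h0

lemma phi_injective : Function.Injective (phi b) := by
  classical
  have main : ∀ p : P, phi b p = 0 → p = 0 := by
    intro p hp
    by_contra hp0
    obtain ⟨d₀, hd₀mem, hd₀⟩ :=
      Finset.exists_mem_eq_sup p.support
        (Finset.nonempty_iff_ne_empty.mpr (mt MvPolynomial.support_eq_empty.mp hp0)) degD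
    have hcoeff : ∀ d ∈ p.support,
        coeff d₀ (theta b (phi b (zz d))) = if d = d₀ then 1 else 0 := by
      intro d hd
      obtain ⟨q, hqW, heq, hq0⟩ := theta_phi_zz b d
      have hcq : coeff d₀ q = 0 := by
        by_cases hdz : d = 0
        · rw [hq0 hdz]; simp
        · refine coeff_W hqW ?_
          have h1 : 1 ≤ degD d := by
            rcases Nat.eq_zero_or_pos (degD d) with h' | h'
            · exact absurd (degD_eq_zero h') hdz
            · omega
          have h2 : degD d ≤ degD d₀ := hd₀ ▸ Finset.le_sup hd
          omega
      rw [heq, coeff_add, hcq, add_zero]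
      simp only [zz]
      rw [coeff_monomial]
    have hTp : coeff d₀ (theta b (phi b p)) = coeff d₀ p := by
      conv_lhs => rw [p.as_sum]
      rw [map_sum, map_sum, MvPolynomial.coeff_sum]
      have hterm : ∀ d ∈ p.support,
          coeff d₀ (theta b (phi b (monomial d (coeff d p))))
            = coeff d p * (if d = d₀ then 1 else 0) := fun d hd => by
        rw [show (monomial d (coeff d p) : P) = (coeff d p) • zz d by simp [zz, smul_monomial],
          map_smul, map_smul, coeff_smul, hcoeff d hd, smul_eq_mul]
      rw [Finset.sum_congr rfl hterm, Finset.sum_eq_single_of_mem d₀ hd₀mem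
        (fun d _ hne => by rw [if_neg hne, mul_zero]), if_pos rfl, mul_one]
    rw [hp, map_zero] at hTp
    exact absurd hTp.symm (Finsupp.mem_support_iff.mp hd₀mem)
  intro p q hpq
  have : phi b (p - q) = 0 := by rw [map_sub, hpq, sub_self]
  exact sub_eq_zero.mp (main _ this)

lemma listProdX : ∀ w : List ι, ((w.map (X : ι → P)).prod : P) = zz (dOf w)
  | [] => by rw [List.map_nil, List.prod_nil, dOf_nil, zz_zero]
  | (j :: t) => by
    rw [List.map_cons, List.prod_cons, listProdX t, dOf_cons, X_eq_zz]
    simp only [zz]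
    rw [monomial_mul, one_mul]

end Phi
end PBWrep


namespace PBWfinal
open PBWrep MvPolynomial
set_option linter.unusedSectionVars false
variable {K : Type*} [Field K] [CharZero K] {L : Type*} [LieRing L] [LieAlgebra K L]
variable {ι : Type*} [LinearOrder ι] (b : Module.Basis ι K L)

lemma main_prop {n : ℕ} (x : Fin n → L) :
    PBWrep.phi b ((PBWaux.symmEquivMv K L b) ((List.ofFn fun i => ιS K L (x i)).prod))
      = PBWrep.SymT (K := K) n x := by
  classical
  set e := PBWaux.symmEquivMv K L b with he
  set Φ₀ : SymmAlgebra K L →ₗ[K] UniversalEnvelopingAlgebra K L :=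
    (PBWrep.phi b) ∘ₗ e.toLinearMap with hΦ
  have hext : Φ₀.compMultilinearMap
      ((MultilinearMap.mkPiAlgebraFin K n (SymmAlgebra K L)).compLinearMap
        (fun _ => ιS K L)) = PBWrep.SymT (K := K) n := by
    apply Module.Basis.ext_multilinear (fun _ => b)
    intro g
    simp only [LinearMap.compMultilinearMap_apply, MultilinearMap.compLinearMap_apply,
      MultilinearMap.mkPiAlgebraFin_apply, hΦ, LinearMap.coe_comp, Function.comp_apply,
      AlgEquiv.toLinearMap_apply]
    rw [map_list_prod e _, List.map_ofFn]
    have hXe : (⇑e ∘ fun i => ιS K L (b (g i))) = (X : ι → MvPolynomial ι K) ∘ g := by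
      funext i
      exact PBWaux.toMv_ιS_basis K L b (g i)
    rw [hXe]
    rw [show List.ofFn ((X : ι → MvPolynomial ι K) ∘ g)
        = (List.ofFn g).map (X : ι → MvPolynomial ι K) from (List.map_ofFn (f := g) (g := X)).symm]
    rw [PBWrep.listProdX, PBWrep.phi_zz_ofFn]
    rfl
  have h := DFunLike.congr_fun hext x
  simp only [LinearMap.compMultilinearMap_apply, MultilinearMap.compLinearMap_apply,
    MultilinearMap.mkPiAlgebraFin_apply, hΦ, LinearMap.coe_comp, Function.comp_apply,
    AlgEquiv.toLinearMap_apply] at h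
  exact h

end PBWfinal

/-- **Poincaré–Birkhoff–Witt** (characteristic zero form): for a Lie algebra `g`
over a field of characteristic zero, the symmetrization map
`Φ : S(g) → U(g)`, `x₁⋯xₙ ↦ (1/n!) ∑_{σ} x_{σ(1)}⋯x_{σ(n)}`, is a linear
isomorphism. -/
theorem pbw_symmetrization_isomorphism (K : Type*) [Field K] [CharZero K]
    (L : Type*) [LieRing L] [LieAlgebra K L] :
    ∃ Φ : SymmAlgebra K L ≃ₗ[K] UniversalEnvelopingAlgebra K L,
      IsSymmetrization K L Φ := by
  classical
  letI : LinearOrder (Module.Basis.ofVectorSpaceIndex K L) := IsWellOrder.linearOrder WellOrderingRel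
  let b : Module.Basis (Module.Basis.ofVectorSpaceIndex K L) K L := Module.Basis.ofVectorSpace K L
  let e := PBWaux.symmEquivMv K L b
  let Φ₀ : SymmAlgebra K L →ₗ[K] UniversalEnvelopingAlgebra K L :=
    (PBWrep.phi b) ∘ₗ e.toLinearMap
  have hbij : Function.Bijective Φ₀ := by
    have hco : ⇑Φ₀ = (PBWrep.phi b) ∘ ⇑e := by
      funext u
      simp [Φ₀]
    rw [hco]
    constructor
    · exact (PBWrep.phi_injective b).comp e.injective
    · exact (PBWrep.phi_surjective b).comp e.surjective
  refine ⟨LinearEquiv.ofBijective Φ₀ hbij, ?_⟩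
  intro n x
  rw [LinearEquiv.ofBijective_apply]
  show PBWrep.phi b (e.toLinearMap ((List.ofFn fun i => ιS K L (x i)).prod)) = _
  rw [AlgEquiv.toLinearMap_apply]
  rw [PBWfinal.main_prop b x, PBWrep.SymT_apply]
end
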